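/- Let A ∈ ℝ^{n×n}, B ∈ ℝ^{n×m}, B₁ ∈ ℝ^{n×p}, and let Σ be a symmetric positive semidefinite n×n matrix. The dual functional G defined on symmetric n×n matrices by G(Π) = trace((AᵀΠ + ΠA − ΠBBᵀΠ)Σ + ΠB₁B₁ᵀ) is concave: for all symmetric Π₁, Π₂ and all λ ∈ [0,1], G(λΠ₁ + (1−λ)Π₂) ≥ λG(Π₁) + (1−λ)G(Π₂). -/

import Mathlib

open Matrix

/-- The controllability matrix `[B, AB, A²B, …, A^{n−1}B]` (columns indexed by `Fin n × Fin m`). -/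
def ctrbMatrix {n m : ℕ} (A : Matrix (Fin n) (Fin n) ℝ) (B : Matrix (Fin n) (Fin m) ℝ) :
    Matrix (Fin n) (Fin n × Fin m) ℝ :=
  Matrix.of fun i p => ((A ^ (p.1 : ℕ)) * B) i p.2

/-- `(A,B)` is a controllable pair iff the controllability matrix has rank `n`. -/
def IsControllablePair {n m : ℕ} (A : Matrix (Fin n) (Fin n) ℝ)
    (B : Matrix (Fin n) (Fin m) ℝ) : Prop :=
  (ctrbMatrix A B).rank = n

/-- A real square matrix is Hurwitz iff all its (complex) eigenvalues have negative real part. -/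
def IsHurwitz {n : ℕ} (F : Matrix (Fin n) (Fin n) ℝ) : Prop :=
  ∀ μ ∈ spectrum ℂ (F.map (algebraMap ℝ ℂ)), μ.re < 0

/-- for `Σ ⪰ 0`, the dual functional
`G(Π) = trace((AᵀΠ + ΠA − ΠBBᵀΠ)Σ + ΠB₁B₁ᵀ)` is concave on symmetric matrices. -/
theorem stmt17 {n m p : ℕ} (A : Matrix (Fin n) (Fin n) ℝ) (B : Matrix (Fin n) (Fin m) ℝ)
    (B₁ : Matrix (Fin n) (Fin p) ℝ)
    (S : Matrix (Fin n) (Fin n) ℝ) (hS : S.PosSemidef)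
    (P₁ P₂ : Matrix (Fin n) (Fin n) ℝ) (hP₁ : P₁.IsSymm) (hP₂ : P₂.IsSymm)
    (l : ℝ) (hl0 : 0 ≤ l) (hl1 : l ≤ 1) :
    l * ((Aᵀ * P₁ + P₁ * A - P₁ * (B * Bᵀ) * P₁) * S + P₁ * (B₁ * B₁ᵀ)).trace
      + (1 - l) * ((Aᵀ * P₂ + P₂ * A - P₂ * (B * Bᵀ) * P₂) * S + P₂ * (B₁ * B₁ᵀ)).trace
    ≤ ((Aᵀ * (l • P₁ + (1 - l) • P₂) + (l • P₁ + (1 - l) • P₂) * A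
          - (l • P₁ + (1 - l) • P₂) * (B * Bᵀ) * (l • P₁ + (1 - l) • P₂)) * S
        + (l • P₁ + (1 - l) • P₂) * (B₁ * B₁ᵀ)).trace := by
  set D := P₁ - P₂ with hD
  have hDsymm : Dᵀ = D := by
    simp [hD, Matrix.transpose_sub, hP₁.eq, hP₂.eq]
  have hSsymm : Sᵀ = S := by
    have := hS.isHermitian
    rwa [Matrix.IsHermitian, Matrix.conjTranspose_eq_transpose_of_trivial] at this
  have key : 0 ≤ ((D * (B * Bᵀ) * D) * S).trace := by
    have h1 : ((D * (B * Bᵀ) * D) * S).trace = ((Bᵀ * D) * S * (Bᵀ * D)ᵀ).trace := by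
      rw [Matrix.transpose_mul, hDsymm, Matrix.transpose_transpose,
        Matrix.trace_mul_comm (Bᵀ * D * S) (D * B)]
      simp only [Matrix.mul_assoc]
    rw [h1]
    have h2 : ((Bᵀ * D) * S * (Bᵀ * D)ᵀ).PosSemidef := by
      have := hS.mul_mul_conjTranspose_same (Bᵀ * D)
      simpa using this
    have diag : ∀ i, 0 ≤ ((Bᵀ * D) * S * (Bᵀ * D)ᵀ) i i := fun i => by
      exact h2.diag_nonneg
    rw [Matrix.trace]
    exact Finset.sum_nonneg fun i _ => diag i
  have comm : (P₁ * (B * Bᵀ) * P₂ * S).trace = (P₂ * (B * Bᵀ) * P₁ * S).trace := by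
    have : (P₁ * (B * Bᵀ) * P₂ * S)ᵀ = S * (P₂ * (B * Bᵀ) * P₁) := by
      simp [Matrix.transpose_mul, hP₁.eq, hP₂.eq, hSsymm, Matrix.mul_assoc]
    calc (P₁ * (B * Bᵀ) * P₂ * S).trace = (P₁ * (B * Bᵀ) * P₂ * S)ᵀ.trace := (Matrix.trace_transpose _).symm
      _ = (S * (P₂ * (B * Bᵀ) * P₁)).trace := by rw [this]
      _ = (P₂ * (B * Bᵀ) * P₁ * S).trace := by rw [Matrix.trace_mul_comm]
  have expand : ((Aᵀ * (l • P₁ + (1 - l) • P₂) + (l • P₁ + (1 - l) • P₂) * A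
          - (l • P₁ + (1 - l) • P₂) * (B * Bᵀ) * (l • P₁ + (1 - l) • P₂)) * S
        + (l • P₁ + (1 - l) • P₂) * (B₁ * B₁ᵀ)).trace
      - (l * ((Aᵀ * P₁ + P₁ * A - P₁ * (B * Bᵀ) * P₁) * S + P₁ * (B₁ * B₁ᵀ)).trace
      + (1 - l) * ((Aᵀ * P₂ + P₂ * A - P₂ * (B * Bᵀ) * P₂) * S + P₂ * (B₁ * B₁ᵀ)).trace)
      = l * (1 - l) * ((D * (B * Bᵀ) * D) * S).trace := by
    simp only [hD, Matrix.add_mul, Matrix.mul_add, Matrix.sub_mul, Matrix.mul_sub,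
      Matrix.smul_mul, Matrix.mul_smul, Matrix.trace_add, Matrix.trace_sub,
      Matrix.trace_smul, smul_eq_mul]
    nlinarith [comm, sq_nonneg l]
  nlinarith [mul_nonneg (mul_nonneg hl0 (by linarith : (0:ℝ) ≤ 1 - l)) key, expand]
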